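/- Every linear endomorphism Z of V that commutes with all elements of A is a scalar multiple of the identity; that is, the commutant End_A(V) of A in End_ℂ(V) equals ℂ·id_V. (Dixmier's version of Schur's lemma, part (ii) of Lemma 1.8.) -/

import Mathlib

open Polynomial Cardinal

/-- If all `Z - c • 1` are units, then `aeval Z p` is a unit for every nonzero `p : ℂ[X]`. -/
private lemma dixmier_aeval_isUnit {V : Type*} [AddCommGroup V] [Module ℂ V]
    (Z : Module.End ℂ V)
    (hall : ∀ c : ℂ, IsUnit (Z - c • (1 : Module.End ℂ V)))
    {p : ℂ[X]} (hp : p ≠ 0) : IsUnit (Polynomial.aeval Z p) := by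
  have hXC : ∀ c : ℂ, Polynomial.aeval Z (X - C c) = Z - c • (1 : Module.End ℂ V) := by
    intro c
    simp [Algebra.algebraMap_eq_smul_one]
  have hlist : ∀ l : List ℂ,
      IsUnit (Polynomial.aeval Z (l.map fun a => X - C a).prod) := by
    intro l
    induction l with
    | nil => simp
    | cons a t ih =>
      rw [List.map_cons, List.prod_cons, map_mul, hXC]
      exact (hall a).mul ih
  have hsp : p.Splits := IsAlgClosed.splits p
  rw [hsp.eq_prod_roots, map_mul, Polynomial.aeval_C]
  refine ((isUnit_iff_ne_zero.mpr (Polynomial.leadingCoeff_ne_zero.mpr hp)).map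
    (algebraMap ℂ (Module.End ℂ V))).mul ?_
  rw [← Multiset.coe_toList p.roots, Multiset.map_coe, Multiset.prod_coe]
  exact hlist _

/-- Partial fractions: the coefficients in a vanishing linear combination of resolvents
of `Z` vanish. -/
private lemma dixmier_coeff_zero {V : Type*} [AddCommGroup V] [Module ℂ V] [Nontrivial V]
    (Z : Module.End ℂ V)
    (hall : ∀ c : ℂ, IsUnit (Z - c • (1 : Module.End ℂ V)))
    (s : Finset ℂ) (m : ℂ → ℂ)
    (hm : ∑ j ∈ s, m j • Ring.inverse (Z - j • (1 : Module.End ℂ V)) = 0)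
    {i : ℂ} (hi : i ∈ s) : m i = 0 := by
  classical
  set R : ℂ → Module.End ℂ V := fun c => Ring.inverse (Z - c • 1) with hR
  have hcancel : ∀ c : ℂ, (Z - c • (1 : Module.End ℂ V)) * R c = 1 := fun c =>
    Ring.mul_inverse_cancel _ (hall c)
  have hXC : ∀ c : ℂ, Polynomial.aeval Z (X - C c) = Z - c • (1 : Module.End ℂ V) := by
    intro c
    simp [Algebra.algebraMap_eq_smul_one]
  set b : Module.End ℂ V := Polynomial.aeval Z (∏ j ∈ s, (X - C j)) with hbdef
  have h1 : ∀ j ∈ s, b * R j = Polynomial.aeval Z (∏ k ∈ s.erase j, (X - C k)) := by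
    intro j hj
    rw [hbdef, ← Finset.prod_erase_mul s _ hj, map_mul, hXC, mul_assoc, hcancel, mul_one]
  have hm2 : (∑ j ∈ s, m j • (b * R j)) = 0 := by
    have h := congrArg (fun w => b * w) hm
    simpa [Finset.mul_sum, mul_smul_comm] using h
  have hm3 : ∑ j ∈ s, m j • Polynomial.aeval Z (∏ k ∈ s.erase j, (X - C k)) = 0 := by
    rw [← hm2]
    exact Finset.sum_congr rfl fun j hj => by rw [h1 j hj]
  set p : ℂ[X] := ∑ j ∈ s, C (m j) * ∏ k ∈ s.erase j, (X - C k) with hpdef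
  have hap : Polynomial.aeval Z p = 0 := by
    rw [hpdef, map_sum, ← hm3]
    refine Finset.sum_congr rfl fun j hj => ?_
    rw [map_mul, Polynomial.aeval_C, ← Algebra.smul_def]
  have hp0 : p = 0 := by
    by_contra h
    exact (dixmier_aeval_isUnit Z hall h).ne_zero hap
  have h2 : ∀ j ∈ s.erase i, m j * ∏ k ∈ s.erase j, (i - k) = 0 := by
    intro j hj
    have hij : i ∈ s.erase j :=
      Finset.mem_erase_of_ne_of_mem (Finset.ne_of_mem_erase hj).symm hi
    rw [← Finset.prod_erase_mul _ _ hij, sub_self, mul_zero, mul_zero]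
  have hev : Polynomial.eval i p = 0 := by rw [hp0, eval_zero]
  rw [hpdef] at hev
  simp only [Polynomial.eval_finset_sum, eval_mul, eval_C, Polynomial.eval_prod, eval_sub,
    eval_X] at hev
  rw [← Finset.sum_erase_add _ _ hi, Finset.sum_eq_zero h2, zero_add] at hev
  exact eq_zero_of_ne_zero_of_mul_right_eq_zero (Finset.prod_ne_zero_iff.2 fun j hj =>
    sub_ne_zero.2 (Finset.ne_of_mem_erase hj).symm) hev

/-- **Dixmier's version of Schur's lemma.**
If `V` is a complex vector space of countable dimension and `A` is a unital
subalgebra of `End ℂ V` acting irreducibly on `V`, then every endomorphism `Z`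
of `V` commuting with all of `A` is a scalar multiple of the identity. -/
theorem dixmier_schur {V : Type*} [AddCommGroup V] [Module ℂ V]
    (hcount : ∃ s : Set V, s.Countable ∧ Submodule.span ℂ s = ⊤)
    (A : Subalgebra ℂ (Module.End ℂ V))
    (hirr : ∀ p : Submodule ℂ V, (∀ T ∈ A, ∀ x ∈ p, T x ∈ p) → p = ⊥ ∨ p = ⊤)
    (Z : Module.End ℂ V) (hZ : ∀ T ∈ A, Z * T = T * Z) :
    ∃ c : ℂ, Z = c • (1 : Module.End ℂ V) := by
  classical
  rcases subsingleton_or_nontrivial V with hV | hV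
  · exact ⟨0, by ext x; exact Subsingleton.elim _ _⟩
  have hcommT : ∀ (c : ℂ), ∀ T ∈ A, (Z - c • (1 : Module.End ℂ V)) * T
      = T * (Z - c • (1 : Module.End ℂ V)) := by
    intro c T hT
    rw [sub_mul, mul_sub, hZ T hT, smul_mul_assoc, mul_smul_comm, one_mul, mul_one]
  have hker : ∀ D : Module.End ℂ V, (∀ T ∈ A, D * T = T * D) →
      LinearMap.ker D = ⊥ ∨ LinearMap.ker D = ⊤ := by
    intro D hD
    refine hirr _ fun T hT x hx => ?_
    have hDT : D (T x) = T (D x) := by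
      have h := congrArg (fun f : Module.End ℂ V => f x) (hD T hT)
      simpa [Module.End.mul_apply] using h
    rw [LinearMap.mem_ker] at hx ⊢
    rw [hDT, hx, map_zero]
  by_cases hall : ∀ c : ℂ, IsUnit (Z - c • (1 : Module.End ℂ V))
  · exfalso
    obtain ⟨v, hv⟩ := exists_ne (0 : V)
    have hinj : ∀ D : Module.End ℂ V, (∀ T ∈ A, D * T = T * D) → D v = 0 → D = 0 := by
      intro D hD hDv
      rcases hker D hD with h | h
      · exfalso
        apply hv
        have : v ∈ LinearMap.ker D := by rwa [LinearMap.mem_ker]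
        rwa [h, Submodule.mem_bot] at this
      · exact LinearMap.ker_eq_top.mp h
    have hRcomm : ∀ (c : ℂ), ∀ T ∈ A,
        Ring.inverse (Z - c • (1 : Module.End ℂ V)) * T
          = T * Ring.inverse (Z - c • (1 : Module.End ℂ V)) := by
      intro c T hT
      have hu := (hall c).unit_spec
      have h1 : Commute T ((hall c).unit : Module.End ℂ V) := by
        rw [hu]
        exact (hcommT c T hT).symm
      have h2 := h1.units_inv_right
      rw [← hu, Ring.inverse_unit]
      exact h2.symm
    have hli : LinearIndependent ℂ
        fun c : ℂ => (Ring.inverse (Z - c • (1 : Module.End ℂ V))) v := by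
      rw [linearIndependent_iff']
      intro s g hg i hi
      set D : Module.End ℂ V :=
        ∑ j ∈ s, g j • Ring.inverse (Z - j • (1 : Module.End ℂ V)) with hD
      have hDv : D v = 0 := by
        rw [hD]
        simpa [LinearMap.sum_apply, LinearMap.smul_apply] using hg
      have hDcomm : ∀ T ∈ A, D * T = T * D := by
        intro T hT
        rw [hD, Finset.sum_mul, Finset.mul_sum]
        exact Finset.sum_congr rfl fun j hj => by
          rw [smul_mul_assoc, mul_smul_comm, hRcomm j T hT]
      exact dixmier_coeff_zero Z hall s g (hD.symm.trans (hinj D hDcomm hDv)) hi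
    obtain ⟨sC, hsc, hspan⟩ := hcount
    have h2 : Module.rank ℂ V ≤ ℵ₀ := by
      rw [← rank_top ℂ V, ← hspan]
      exact (rank_span_le (R := ℂ) sC).trans
        (Cardinal.mk_le_aleph0_iff.mpr hsc.to_subtype)
    have h3 := hli.cardinal_lift_le_rank
    have h4 := h3.trans (Cardinal.lift_le.mpr h2)
    rw [Cardinal.lift_aleph0, Cardinal.lift_le_aleph0, mk_complex] at h4
    exact absurd h4 Cardinal.aleph0_lt_continuum.not_ge
  · push_neg at hall
    obtain ⟨c, hc⟩ := hall
    refine ⟨c, ?_⟩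
    set S := Z - c • (1 : Module.End ℂ V) with hS
    have hSc := hcommT c
    rcases hker S hSc with h | h
    · have hrange : LinearMap.range S = ⊥ ∨ LinearMap.range S = ⊤ := by
        refine hirr _ fun T hT x hx => ?_
        obtain ⟨y, rfl⟩ := hx
        refine ⟨T y, ?_⟩
        have hE := congrArg (fun f : Module.End ℂ V => f y) (hSc T hT)
        simpa [Module.End.mul_apply, hS] using hE
      rcases hrange with h2 | h2
      · have hS0 : S = 0 := LinearMap.range_eq_bot.mp h2
        rw [← sub_eq_zero]
        exact hS0
      · exact absurd ((Module.End.isUnit_iff S).mpr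
          ⟨LinearMap.ker_eq_bot.mp h, LinearMap.range_eq_top.mp h2⟩) hc
    · have hS0 : S = 0 := LinearMap.ker_eq_top.mp h
      rw [← sub_eq_zero]
      exact hS0
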